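/- For α ∈ (0, 1/2), B ≥ 2, the integral ∫₁^∞ (τ-1)^(-α) (τ^(-α) - (τ + 1/B)^(-α)) dτ is at most (1/(1-α)) · B^(-1). -/

import Mathlib

open MeasureTheory Real Set

theorem stmt_8 (α B : ℝ) (hα : α ∈ Set.Ioo (0:ℝ) (1/2)) (hB : 2 ≤ B) :
    (∫ τ in Set.Ioi (1:ℝ), (τ - 1) ^ (-α) * (τ ^ (-α) - (τ + 1/B) ^ (-α))) ≤
      (1 / (1 - α)) * B⁻¹ := by
  obtain ⟨hα0, hα2⟩ := hα
  have hα1 : α < 1 := by linarith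
  have h1α : (0:ℝ) < 1 - α := by linarith
  have hB0 : (0:ℝ) < B := by linarith
  set c : ℝ := 1/B with hc
  have hc0 : 0 < c := by positivity
  set f : ℝ → ℝ := fun τ => (τ - 1) ^ (-α) * (τ ^ (-α) - (τ + c) ^ (-α)) with hf
  set h : ℝ → ℝ := fun τ => (τ - 1) ^ (-α) * τ ^ (-α - 1) with hh
  set g : ℝ → ℝ := fun τ => α * c * h τ with hg
  -- pointwise: 0 ≤ f τ ≤ g τ for τ ∈ Ioi 1
  have key : ∀ τ ∈ Ioi (1:ℝ), 0 ≤ f τ ∧ f τ ≤ g τ := by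
    intro τ hτ
    have hτ1 : (1:ℝ) < τ := hτ
    have hτ0 : (0:ℝ) < τ := by linarith
    have hτ10 : 0 < τ - 1 := by linarith
    have hu0 : 0 ≤ c / τ := by positivity
    have hsplit : (τ + c) ^ (-α) = τ ^ (-α) * (1 + c / τ) ^ (-α) := by
      rw [← Real.mul_rpow hτ0.le (by linarith : (0:ℝ) ≤ 1 + c / τ)]
      congr 1
      field_simp
    have hber : (1 + c / τ) ^ α ≤ 1 + α * (c / τ) := by
      have := rpow_one_add_le_one_add_mul_self (s := c / τ) (by linarith) hα0.le hα1.le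
      linarith [this]
    have hy1 : (1:ℝ) ≤ (1 + c / τ) ^ α :=
      Real.one_le_rpow (by linarith) hα0.le
    have hy0 : (0:ℝ) < (1 + c / τ) ^ α := by linarith
    have hkey : 1 - (1 + c / τ) ^ (-α) ≤ α * (c / τ) := by
      rw [Real.rpow_neg (by linarith)]
      have h1 : 1 - ((1 + c / τ) ^ α)⁻¹ ≤ (1 + c / τ) ^ α - 1 := by
        nlinarith [mul_inv_cancel₀ hy0.ne', sq_nonneg ((1 + c / τ) ^ α - 1),
          inv_nonneg.2 hy0.le]
      linarith
    have hmono : (τ + c) ^ (-α) ≤ τ ^ (-α) :=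
      antitoneOn_rpow_Ioi_of_exponent_nonpos (by linarith)
        (mem_Ioi.2 hτ0) (mem_Ioi.2 (by linarith)) (by linarith)
    have hpos : (0:ℝ) ≤ (τ - 1) ^ (-α) := Real.rpow_nonneg hτ10.le _
    constructor
    · exact mul_nonneg hpos (by linarith)
    · have hdiff : τ ^ (-α) - (τ + c) ^ (-α) ≤ α * c * τ ^ (-α - 1) := by
        rw [hsplit]
        have : τ ^ (-α) - τ ^ (-α) * (1 + c / τ) ^ (-α)
            = τ ^ (-α) * (1 - (1 + c / τ) ^ (-α)) := by ring
        rw [this]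
        have h2 : τ ^ (-α) * (1 - (1 + c / τ) ^ (-α)) ≤ τ ^ (-α) * (α * (c / τ)) :=
          mul_le_mul_of_nonneg_left hkey (Real.rpow_nonneg hτ0.le _)
        have h3 : τ ^ (-α) * (α * (c / τ)) = α * c * τ ^ (-α - 1) := by
          rw [show (-α - 1) = -α - 1 from rfl, Real.rpow_sub_one hτ0.ne']
          field_simp
        linarith [h2, h3.symm.le, h3 ▸ h2]
      calc f τ ≤ (τ - 1) ^ (-α) * (α * c * τ ^ (-α - 1)) :=
            mul_le_mul_of_nonneg_left hdiff hpos
        _ = g τ := by simp only [hg, hh]; ring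
  -- integrability pieces
  have hαlt : -α - 1 < -1 := by linarith
  have hB2 : IntegrableOn (fun τ : ℝ => τ ^ (-α - 1)) (Ioi 2) :=
    integrableOn_Ioi_rpow_of_lt hαlt two_pos
  have hA : IntegrableOn (fun τ : ℝ => (τ - 1) ^ (-α)) (Ioc 1 2) := by
    rw [← intervalIntegrable_iff_integrableOn_Ioc_of_le one_le_two]
    have := (intervalIntegral.intervalIntegrable_rpow' (a := 0) (b := 1) (r := -α)
      (by linarith)).comp_sub_right 1
    simpa [show (1:ℝ)+1 = 2 from by norm_num] using this
  have hcontOn : ∀ s : Set ℝ, s ⊆ Ioi 1 → ContinuousOn h s := by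
    intro s hs
    apply ContinuousOn.mul
    · apply ContinuousOn.rpow_const ((continuous_id.sub continuous_const).continuousOn)
      intro x hx; left; have := hs hx; simp only [mem_Ioi] at this
      intro h'; simp at h'; linarith
    · apply ContinuousOn.rpow_const continuous_id.continuousOn
      intro x hx; left; have := hs hx; simp only [mem_Ioi] at this
      intro h'; simp at h'; linarith
  have hC : IntegrableOn h (Ioc 1 2) := by
    apply Integrable.mono' hA
    · exact (hcontOn _ (Ioc_subset_Ioi_self)).aestronglyMeasurable measurableSet_Ioc
    · filter_upwards [ae_restrict_mem measurableSet_Ioc] with τ hτ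
      obtain ⟨hτ1, hτ2⟩ := hτ
      have hτ10 : 0 < τ - 1 := by linarith
      rw [Real.norm_eq_abs, abs_of_nonneg
        (mul_nonneg (Real.rpow_nonneg hτ10.le _) (Real.rpow_nonneg (by linarith) _))]
      have : τ ^ (-α - 1) ≤ 1 :=
        Real.rpow_le_one_of_one_le_of_nonpos (by linarith) (by linarith)
      calc (τ - 1) ^ (-α) * τ ^ (-α - 1) ≤ (τ - 1) ^ (-α) * 1 :=
            mul_le_mul_of_nonneg_left this (Real.rpow_nonneg hτ10.le _)
        _ = (τ - 1) ^ (-α) := mul_one _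
  have hD : IntegrableOn h (Ioi 2) := by
    apply Integrable.mono' hB2
    · exact (hcontOn (Ioi 2) (fun x hx => mem_Ioi.2 (lt_trans one_lt_two hx))).aestronglyMeasurable
        measurableSet_Ioi
    · filter_upwards [ae_restrict_mem measurableSet_Ioi] with τ hτ
      have hτ2 : (2:ℝ) < τ := hτ
      have hτ10 : (1:ℝ) ≤ τ - 1 := by linarith
      rw [Real.norm_eq_abs, abs_of_nonneg
        (mul_nonneg (Real.rpow_nonneg (by linarith) _) (Real.rpow_nonneg (by linarith) _))]
      have : (τ - 1) ^ (-α) ≤ 1 :=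
        Real.rpow_le_one_of_one_le_of_nonpos hτ10 (by linarith)
      calc (τ - 1) ^ (-α) * τ ^ (-α - 1) ≤ 1 * τ ^ (-α - 1) :=
            mul_le_mul_of_nonneg_right this (Real.rpow_nonneg (by linarith) _)
        _ = τ ^ (-α - 1) := one_mul _
  have hhint : IntegrableOn h (Ioi 1) := by
    rw [← Ioc_union_Ioi_eq_Ioi (one_le_two : (1:ℝ) ≤ 2)]
    exact hC.union hD
  have hgint : IntegrableOn g (Ioi 1) := (hhint.const_mul _)
  -- f is integrable on Ioi 1
  have hfmeas : AEStronglyMeasurable f (volume.restrict (Ioi 1)) := by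
    apply ContinuousOn.aestronglyMeasurable _ measurableSet_Ioi
    apply ContinuousOn.mul
    · apply ContinuousOn.rpow_const ((continuous_id.sub continuous_const).continuousOn)
      intro x hx; left; simp only [mem_Ioi] at hx; intro h'; simp at h'; linarith
    · apply ContinuousOn.sub
      · apply ContinuousOn.rpow_const continuous_id.continuousOn
        intro x hx; left; simp only [mem_Ioi] at hx; intro h'; simp at h'; linarith
      · apply ContinuousOn.rpow_const ((continuous_id.add continuous_const).continuousOn)
        intro x hx; left; simp only [mem_Ioi] at hx; intro h'; simp at h'; linarith [inv_pos.2 hB0]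
  have hfint : IntegrableOn f (Ioi 1) := by
    apply Integrable.mono' hgint hfmeas
    filter_upwards [ae_restrict_mem measurableSet_Ioi] with τ hτ
    obtain ⟨h0, h1⟩ := key τ hτ
    rw [Real.norm_eq_abs, abs_of_nonneg h0]; exact h1
  -- main comparison
  have step1 : (∫ τ in Ioi (1:ℝ), f τ) ≤ ∫ τ in Ioi (1:ℝ), g τ := by
    apply setIntegral_mono_on hfint hgint measurableSet_Ioi
    intro τ hτ; exact (key τ hτ).2
  -- compute/bound ∫ g
  have hIoc : (∫ τ in Ioc (1:ℝ) 2, h τ) ≤ 1 / (1 - α) := by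
    have hle : (∫ τ in Ioc (1:ℝ) 2, h τ) ≤ ∫ τ in Ioc (1:ℝ) 2, (τ - 1) ^ (-α) := by
      apply setIntegral_mono_on hC hA measurableSet_Ioc
      intro τ hτ
      obtain ⟨hτ1, hτ2⟩ := hτ
      have : τ ^ (-α - 1) ≤ 1 :=
        Real.rpow_le_one_of_one_le_of_nonpos (by linarith) (by linarith)
      calc (τ - 1) ^ (-α) * τ ^ (-α - 1) ≤ (τ - 1) ^ (-α) * 1 :=
            mul_le_mul_of_nonneg_left this (Real.rpow_nonneg (by linarith) _)
        _ = (τ - 1) ^ (-α) := mul_one _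
    have hval : (∫ τ in Ioc (1:ℝ) 2, (τ - 1) ^ (-α)) = 1 / (1 - α) := by
      rw [← intervalIntegral.integral_of_le one_le_two]
      rw [intervalIntegral.integral_comp_sub_right (fun x => x ^ (-α)) 1]
      norm_num
      rw [integral_rpow (Or.inl (by linarith))]
      rw [Real.one_rpow, Real.zero_rpow (by linarith : -α + 1 ≠ 0)]
      ring
    linarith [hle, hval.le, hval ▸ hle]
  have hIoi2 : (∫ τ in Ioi (2:ℝ), h τ) ≤ 1 / α := by
    have hle : (∫ τ in Ioi (2:ℝ), h τ) ≤ ∫ τ in Ioi (2:ℝ), τ ^ (-α - 1) := by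
      apply setIntegral_mono_on hD hB2 measurableSet_Ioi
      intro τ hτ
      have hτ2 : (2:ℝ) < τ := hτ
      have : (τ - 1) ^ (-α) ≤ 1 :=
        Real.rpow_le_one_of_one_le_of_nonpos (by linarith) (by linarith)
      calc (τ - 1) ^ (-α) * τ ^ (-α - 1) ≤ 1 * τ ^ (-α - 1) :=
            mul_le_mul_of_nonneg_right this (Real.rpow_nonneg (by linarith) _)
        _ = τ ^ (-α - 1) := one_mul _
    have hval : (∫ τ in Ioi (2:ℝ), τ ^ (-α - 1)) = 2 ^ (-α) / α := by
      rw [integral_Ioi_rpow_of_lt hαlt two_pos]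
      rw [show (-α - 1 + 1) = -α by ring]
      field_simp
    have h2a : (2:ℝ) ^ (-α) ≤ 1 :=
      Real.rpow_le_one_of_one_le_of_nonpos one_le_two (by linarith)
    have : (∫ τ in Ioi (2:ℝ), τ ^ (-α - 1)) ≤ 1 / α := by
      rw [hval]
      exact div_le_div_of_nonneg_right h2a hα0.le
    linarith
  have hsplit2 : (∫ τ in Ioi (1:ℝ), h τ) =
      (∫ τ in Ioc (1:ℝ) 2, h τ) + ∫ τ in Ioi (2:ℝ), h τ := by
    rw [← Ioc_union_Ioi_eq_Ioi (one_le_two : (1:ℝ) ≤ 2)]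
    exact setIntegral_union (Ioc_disjoint_Ioi le_rfl) measurableSet_Ioi hC hD
  have hgval : (∫ τ in Ioi (1:ℝ), g τ) = α * c * ∫ τ in Ioi (1:ℝ), h τ := by
    simp only [hg]
    rw [integral_const_mul]
  have hbound : (∫ τ in Ioi (1:ℝ), g τ) ≤ 1 / (1 - α) * c := by
    rw [hgval, hsplit2]
    have h1 : α * c * ((∫ τ in Ioc (1:ℝ) 2, h τ) + ∫ τ in Ioi (2:ℝ), h τ)
        ≤ α * c * (1 / (1 - α) + 1 / α) := by
      apply mul_le_mul_of_nonneg_left _ (by positivity)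
      linarith [hIoc, hIoi2]
    have h2 : α * c * (1 / (1 - α) + 1 / α) = 1 / (1 - α) * c := by
      field_simp
      ring
    linarith
  have : (∫ τ in Ioi (1:ℝ), f τ) ≤ 1 / (1 - α) * c := le_trans step1 hbound
  simpa [hf, hc, one_div] using this
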